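/- Let I be a two-sided ideal of the free algebra U on an alphabet A of 2N letters with a fixed shuffle order. Let e_k(u) be the sum of u_{z1}···u_{zk} over sequences with z1 ≥' ... ≥' zk (strict decrease except equal barred letters allowed), and h_k(u) the sum over sequences z1 ≤'' ... ≤'' zk (weak increase, with equality only allowed for unbarred letters). Then e_k(u)e_l(u) = e_l(u)e_k(u) in U/I for all k,l if and only if h_k(u)h_l(u) = h_l(u)h_k(u) in U/I for all k,l. -/

import Mathlib

open scoped BigOperators
open Classical

noncomputable section

namespace NCS

/-- A colored letter: an element of `Fin N` together with a `Bool` which is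
`true` for barred letters and `false` for unbarred letters. -/
abbrev Letter (N : ℕ) := Fin N × Bool

variable {N : ℕ}

/-- The key of the natural order `1 < 1̄ < 2 < 2̄ < ⋯ < N < N̄`. -/
def natKey (x : Letter N) : ℕ := 2 * x.1.val + (if x.2 then 1 else 0)

/-- The key of the big bar order `1 ≺ ⋯ ≺ N ≺ 1̄ ≺ ⋯ ≺ N̄`. -/
def barKey (N : ℕ) (x : Letter N) : ℕ := if x.2 then N + x.1.val else x.1.val

/-- A shuffle order on the alphabet, encoded by an injective key function which is
increasing on unbarred letters and on barred letters. -/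
def IsShuffleKey (key : Letter N → ℕ) : Prop :=
  Function.Injective key ∧
  (∀ a b : Fin N, a < b → key (a, false) < key (b, false)) ∧
  (∀ a b : Fin N, a < b → key (a, true) < key (b, true))

/-- The free associative `ℤ`-algebra on the alphabet. -/
abbrev FA (N : ℕ) := MonoidAlgebra ℤ (FreeMonoid (Letter N))

/-- The monomial of a colored word. -/
def wrd (w : List (Letter N)) : FA N := MonoidAlgebra.single (FreeMonoid.ofList w) 1

/-- `y ≥' x` : `y > x`, or `y` and `x` are equal barred letters. -/
def colGE (key : Letter N → ℕ) (y x : Letter N) : Prop :=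
  key x < key y ∨ (y = x ∧ y.2 = true)

/-- `y ≤'' z` : `y < z`, or `y` and `z` are equal unbarred letters. -/
def rowLE (key : Letter N → ℕ) (y z : Letter N) : Prop :=
  key y < key z ∨ (y = z ∧ y.2 = false)

/-- `x ≤col y` : `x < y`, or `x` and `y` are equal barred letters. -/
def colLE (key : Letter N → ℕ) (x y : Letter N) : Prop :=
  key x < key y ∨ (x = y ∧ x.2 = true)

/-- The noncommutative super elementary symmetric function `e_k(S)` with letters
restricted to the set `S`. -/
def eSet (key : Letter N → ℕ) (S : Set (Letter N)) (k : ℕ) : FA N :=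
  ∑ f ∈ (Finset.univ : Finset (Fin k → Letter N)).filter
      (fun f => (∀ i, f i ∈ S) ∧ ∀ i j : Fin k, (j : ℕ) = (i : ℕ) + 1 → colGE key (f i) (f j)),
    wrd (List.ofFn f)

/-- The noncommutative super elementary symmetric function `e_k(u)`. -/
def eU (key : Letter N → ℕ) (k : ℕ) : FA N := eSet key Set.univ k

/-- `e_k(u)` with integer index; `0` for negative `k`. -/
def eZ (key : Letter N → ℕ) (k : ℤ) : FA N := if 0 ≤ k then eU key k.toNat else 0

/-- `e_k(S)` with integer index; `0` for negative `k`. -/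
def eSetZ (key : Letter N → ℕ) (S : Set (Letter N)) (k : ℤ) : FA N :=
  if 0 ≤ k then eSet key S k.toNat else 0

/-- The noncommutative super homogeneous symmetric function `h_k(u)`. -/
def hU (key : Letter N → ℕ) (k : ℕ) : FA N :=
  ∑ f ∈ (Finset.univ : Finset (Fin k → Letter N)).filter
      (fun f => ∀ i j : Fin k, (j : ℕ) = (i : ℕ) + 1 → rowLE key (f i) (f j)),
    wrd (List.ofFn f)

/-- The relations generating the two-sided ideal `I_Kron` (with respect to the
natural order; recall `natKey x + 1 = natKey y` says `x = y↓`). -/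
inductive kronRel (N : ℕ) : FA N → FA N → Prop
  | rel3 (x y : Letter N) (hy : y.2 = false) (h : natKey x < natKey y) :
      kronRel N (wrd [y, y, x]) (wrd [y, x, y])
  | rel3b (y z : Letter N) (hy : y.2 = false) (h : natKey y < natKey z) :
      kronRel N (wrd [z, y, y]) (wrd [y, z, y])
  | rel4 (y z : Letter N) (hy : y.2 = true) (h : natKey y < natKey z) :
      kronRel N (wrd [y, y, z]) (wrd [y, z, y])
  | rel4b (x y : Letter N) (hy : y.2 = true) (h : natKey x < natKey y) :
      kronRel N (wrd [x, y, y]) (wrd [y, x, y])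
  | rot (x y z : Letter N) (h1 : natKey x + 1 = natKey y) (h2 : natKey y + 1 = natKey z) :
      kronRel N (wrd [x, z, y] - wrd [z, x, y]) (wrd [y, x, z] - wrd [y, z, x])
  | far (x z : Letter N) (h : natKey x + 2 < natKey z) :
      kronRel N (wrd [x, z]) (wrd [z, x])

/-- The relations generating the ⋖-colored plactic ideal `I_plac^⋖`. -/
inductive placRel (N : ℕ) (key : Letter N → ℕ) : FA N → FA N → Prop
  | k1 (x y z : Letter N) (h1 : key x < key y) (h2 : key y < key z) :
      placRel N key (wrd [x, z, y]) (wrd [z, x, y])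
  | k2 (x y z : Letter N) (h1 : key x < key y) (h2 : key y < key z) :
      placRel N key (wrd [y, x, z]) (wrd [y, z, x])
  | k3 (x y : Letter N) (hy : y.2 = false) (h : key x < key y) :
      placRel N key (wrd [y, y, x]) (wrd [y, x, y])
  | k3b (y z : Letter N) (hy : y.2 = false) (h : key y < key z) :
      placRel N key (wrd [z, y, y]) (wrd [y, z, y])
  | k4 (y z : Letter N) (hy : y.2 = true) (h : key y < key z) :
      placRel N key (wrd [y, y, z]) (wrd [y, z, y])
  | k4b (x y : Letter N) (hy : y.2 = true) (h : key x < key y) :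
      placRel N key (wrd [x, y, y]) (wrd [y, x, y])

/-- The relations generating the ideal `I_kronknuth`. -/
inductive kkRel (N : ℕ) : FA N → FA N → Prop
  | rel3 (x y : Letter N) (hy : y.2 = false) (h : natKey x < natKey y) :
      kkRel N (wrd [y, y, x]) (wrd [y, x, y])
  | rel3b (y z : Letter N) (hy : y.2 = false) (h : natKey y < natKey z) :
      kkRel N (wrd [z, y, y]) (wrd [y, z, y])
  | rel4 (y z : Letter N) (hy : y.2 = true) (h : natKey y < natKey z) :
      kkRel N (wrd [y, y, z]) (wrd [y, z, y])
  | rel4b (x y : Letter N) (hy : y.2 = true) (h : natKey x < natKey y) :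
      kkRel N (wrd [x, y, y]) (wrd [y, x, y])
  | rot (x y z : Letter N) (h1 : natKey x + 1 = natKey y) (h2 : natKey y + 1 = natKey z) :
      kkRel N (wrd [x, z, y] - wrd [z, x, y]) (wrd [y, x, z] - wrd [y, z, x])
  | kk1 (x y z : Letter N) (h1 : natKey x < natKey y) (h2 : natKey y < natKey z)
      (h3 : natKey x + 2 < natKey z) :
      kkRel N (wrd [x, z, y]) (wrd [z, x, y])
  | kk2 (x y z : Letter N) (h1 : natKey x < natKey y) (h2 : natKey y < natKey z)
      (h3 : natKey x + 2 < natKey z) :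
      kkRel N (wrd [y, x, z]) (wrd [y, z, x])

end NCS
namespace NCS

variable {N : ℕ}

/-- The ordinary word `w^r`: barred letters shuffled to the right, that subword
reversed and de-barred.  Letters are recorded `1`-indexed. -/
def plainr (w : List (Letter N)) : List ℕ :=
  (w.filter (fun x => !x.2)).map (fun x => x.1.val + 1) ++
    ((w.filter (fun x => x.2)).reverse).map (fun x => x.1.val + 1)

/-- The number of barred letters of a colored word. -/
def barredCount (w : List (Letter N)) : ℕ := (w.filter (fun x => x.2)).length

/-- An ordinary word (in the `1`-indexed alphabet) is Yamanouchi of content `lam`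
(`lam i` = multiplicity of the letter `i+1`). -/
def IsYamOf (lam : ℕ → ℕ) (u : List ℕ) : Prop :=
  (∀ i : ℕ, u.count (i + 1) = lam i) ∧
    ∀ t i : ℕ, (u.drop t).count (i + 2) ≤ (u.drop t).count (i + 1)

/-- An ordinary word is Yamanouchi (of some content). -/
def IsYamWord (u : List ℕ) : Prop :=
  ∀ t i : ℕ, (u.drop t).count (i + 2) ≤ (u.drop t).count (i + 1)

/-- The set of colored Yamanouchi words of content `lam` with exactly `d` barred letters. -/
def CYW (N : ℕ) (lam : ℕ → ℕ) (d : ℕ) : Set (List (Letter N)) :=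
  {w | IsYamOf lam (plainr w) ∧ barredCount w = d}

/-- `CYW` as a finset (all its members have length `n = Σ lam`). -/
def CYWfin (N : ℕ) (lam : ℕ → ℕ) (d n : ℕ) : Finset (List (Letter N)) :=
  ((Finset.univ : Finset (Fin n → Letter N)).image List.ofFn).filter
    (fun w => w ∈ CYW N lam d)

/-- A set of colored words is shuffle closed. -/
def ShuffleClosed (W : Set (List (Letter N))) : Prop :=
  ∀ (u v : List (Letter N)) (x y : Letter N), x.2 ≠ y.2 →
    (u ++ x :: y :: v) ∈ W → (u ++ y :: x :: v) ∈ W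

/-- The ⋖-descent set of a colored word (`0`-indexed positions). -/
def DesSet (key : Letter N → ℕ) (w : List (Letter N)) : Set ℕ :=
  {i | ∃ h : i + 1 < w.length,
    key (w.get ⟨i + 1, h⟩) < key (w.get ⟨i, Nat.lt_of_succ_lt h⟩) ∨
      (w.get ⟨i, Nat.lt_of_succ_lt h⟩ = w.get ⟨i + 1, h⟩ ∧ (w.get ⟨i + 1, h⟩).2 = true)}

/-- Coefficient of the monomial `m` in Gessel's fundamental quasisymmetric
function `Q_S` for words of length `t`. -/
def Qcoeff (t : ℕ) (S : Set ℕ) (m : ℕ →₀ ℕ) : ℤ :=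
  Nat.card {i : Fin t → ℕ //
    (∀ j k : Fin t, j ≤ k → i j ≤ i k) ∧
    (∀ j k : Fin t, (k : ℕ) = (j : ℕ) + 1 → (j : ℕ) ∈ S → i j < i k) ∧
    (∀ v : ℕ, m v = (Finset.univ.filter (fun j : Fin t => i j = v)).card)}

/-- Gessel's fundamental quasisymmetric function as a power series in the
variables `x_0, x_1, …`. -/
def Qqs (t : ℕ) (S : Set ℕ) : MvPowerSeries ℕ ℤ := fun m => Qcoeff t S m

/-- The boxes of the (possibly restricted) shape with column lengths bounded by
`rows` and row lengths given by `nu`. -/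
def shapeFin (nu : ℕ → ℕ) (rows : ℕ) : Finset (ℕ × ℕ) :=
  (Finset.range rows ×ˢ Finset.range (nu 0)).filter (fun p => p.2 < nu p.1)

/-- `E` is a ⋖-colored tableau of shape `nu` (rows weakly increase with equal
letters unbarred; columns weakly increase with equal letters barred). -/
def IsCT (key : Letter N → ℕ) (nu : ℕ → ℕ) (E : ℕ × ℕ → Letter N) : Prop :=
  (∀ r c : ℕ, c + 1 < nu r → rowLE key (E (r, c)) (E (r, c + 1))) ∧
  (∀ r c : ℕ, c < nu (r + 1) → colLE key (E (r, c)) (E (r + 1, c)))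

/-- Pad a partition given on `Fin n` to a function on `ℕ`. -/
def padF {n : ℕ} (f : Fin n → ℕ) : ℕ → ℕ := fun i => if h : i < n then f ⟨i, h⟩ else 0

/-- Extend a filling of the shape to all of `ℕ × ℕ` by a junk letter. -/
def extT (nu : ℕ → ℕ) (rows : ℕ) (junk : Letter N)
    (T : {p : ℕ × ℕ // p ∈ shapeFin nu rows} → Letter N) : ℕ × ℕ → Letter N :=
  fun p => if h : p ∈ shapeFin nu rows then T ⟨p, h⟩ else junk

/-- The reading word `sqread`: diagonals from southwest to northeast; on each
diagonal the unbarred entries are read in the ↖ direction followed by the barred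
entries in the ↘ direction. -/
def sqread (nu : ℕ → ℕ) (rows : ℕ) (E : ℕ × ℕ → Letter N) : List (Letter N) :=
  (List.range (rows + nu 0)).flatMap (fun k =>
    let boxes : List (ℕ × ℕ) := (List.range rows).filterMap (fun (r : ℕ) =>
      let c : ℤ := (r : ℤ) + (k : ℤ) - (rows : ℤ) + 1
      if 0 ≤ c ∧ c.toNat < nu r then some (r, c.toNat) else none)
    ((boxes.filter (fun b => !(E b).2)).reverse ++ boxes.filter (fun b => (E b).2)).map E)

/-- The column reading word: columns read bottom to top, leftmost column first. -/
def colword (nu : ℕ → ℕ) (rows : ℕ) (E : ℕ × ℕ → Letter N) : List (Letter N) :=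
  (List.range (nu 0)).flatMap (fun c =>
    ((List.range rows).filter (fun r => decide (c < nu r))).reverse.map (fun r => E (r, c)))

/-- The Kostka number: semistandard Young tableaux of shape `nu` and content `m`
(entries `1`-indexed; entry `i+1` corresponds to the variable `x_i`). -/
def kostka (nu : ℕ → ℕ) (m : ℕ →₀ ℕ) : ℤ :=
  Nat.card {T : ℕ × ℕ → ℕ //
    (∀ r c : ℕ, c + 1 < nu r → T (r, c) ≤ T (r, c + 1)) ∧
    (∀ r c : ℕ, c < nu (r + 1) → T (r, c) < T (r + 1, c)) ∧
    (∀ r c : ℕ, c < nu r → 1 ≤ T (r, c)) ∧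
    (∀ r c : ℕ, ¬ c < nu r → T (r, c) = 0) ∧
    (∀ i : ℕ, (m i : ℕ) = Nat.card {p : ℕ × ℕ // p.2 < nu p.1 ∧ T p = i + 1})}

/-- The parts of a partition of `n`, as a weakly decreasing list. -/
def partList {n : ℕ} (ν : Nat.Partition n) : List ℕ := (ν.parts.sort (· ≤ ·)).reverse

/-- The parts of a partition of `n`, as a function `ℕ → ℕ` (`0`-indexed). -/
def partFun {n : ℕ} (ν : Nat.Partition n) : ℕ → ℕ := fun i => (partList ν).getD i 0

/-- The conjugate partition: `ν'_j = #{i < rows : ν_i ≥ j}`. -/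
def conjP (nu : ℕ → ℕ) (j : ℕ) (rows : ℕ) : ℕ :=
  ((Finset.range rows).filter (fun i => j ≤ nu i)).card

/-- The noncommutative super Schur function
`𝔍_ν(u) = Σ_{π ∈ S_t} sgn(π) e_{ν'_1+π(1)-1}(u) ⋯ e_{ν'_t+π(t)-t}(u)`, `t = ν_1`. -/
def JncF (key : Letter N → ℕ) (nu : ℕ → ℕ) (rows : ℕ) : FA N :=
  ∑ π : Equiv.Perm (Fin (nu 0)),
    (Equiv.Perm.sign π : ℤ) •
      (List.ofFn (fun i : Fin (nu 0) =>
        eZ key ((conjP nu (i.1 + 1) rows : ℤ) + ((π i).1 : ℤ) - (i.1 : ℤ)))).prod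

end NCS
namespace NCS

variable {N : ℕ}

/-- A partition diagram (as a set of `0`-indexed boxes). -/
def IsPartitionDiagram (P : Finset (ℕ × ℕ)) : Prop :=
  ∀ p ∈ P, ∀ q : ℕ × ℕ, q.1 ≤ p.1 → q.2 ≤ p.2 → q ∈ P

/-- `p ≤ q` in the northeast order: `q.1 ≤ p.1` and `p.2 ≤ q.2`. -/
def neLE (p q : ℕ × ℕ) : Prop := q.1 ≤ p.1 ∧ p.2 ≤ q.2

/-- A restricted shape: a lower order ideal of a partition diagram for the
northeast order. -/
def IsRestrictedShape (D : Finset (ℕ × ℕ)) : Prop :=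
  ∃ P : Finset (ℕ × ℕ), IsPartitionDiagram P ∧ D ⊆ P ∧
    ∀ p ∈ P, ∀ q ∈ D, neLE p q → p ∈ D

/-- A restricted colored tableau (for the natural order). -/
structure RCT (N : ℕ) where
  shape : Finset (ℕ × ℕ)
  restricted : IsRestrictedShape shape
  entry : ℕ × ℕ → Letter N
  row : ∀ r c : ℕ, (r, c) ∈ shape → (r, c + 1) ∈ shape →
    natKey (entry (r, c)) < natKey (entry (r, c + 1)) ∨
      (entry (r, c) = entry (r, c + 1) ∧ (entry (r, c)).2 = false)
  col : ∀ r c : ℕ, (r, c) ∈ shape → (r + 1, c) ∈ shape →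
    natKey (entry (r, c)) < natKey (entry (r + 1, c)) ∨
      (entry (r, c) = entry (r + 1, c) ∧ (entry (r, c)).2 = true)

/-- A ↖ arrow of `R` from the box `tail` (containing `a+1`) to the box `head`
(containing `a`); the two boxes are opposite corners of a rectangle whose
intersection with the shape is an arrow subtableau. -/
def nwArrow (R : RCT N) (tail head : ℕ × ℕ) : Prop :=
  head ∈ R.shape ∧ tail ∈ R.shape ∧ head.1 < tail.1 ∧ head.2 < tail.2 ∧
  (∃ a b : Fin N, R.entry head = (a, false) ∧ R.entry tail = (b, false) ∧
    (b : ℕ) = (a : ℕ) + 1) ∧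
  ((tail.1 = head.1 + 1 ∧ tail.2 = head.2 + 1 ∧ (tail.1, head.2) ∈ R.shape) ∨
   (head.1 + 1 < tail.1 ∧
    (∀ p ∈ R.shape, head.1 ≤ p.1 → p.1 ≤ tail.1 → head.2 ≤ p.2 → p.2 ≤ tail.2 →
      p.2 = head.2 ∨ p.1 = tail.1) ∧
    (∀ r : ℕ, head.1 ≤ r → r ≤ tail.1 → (r, head.2) ∈ R.shape) ∧
    (∀ c : ℕ, head.2 ≤ c → c ≤ tail.2 → (tail.1, c) ∈ R.shape)))

/-- A ↘ arrow of `R` from the box `tail` (containing `ā`) to the box `head`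
(containing `(a+1)`-bar). -/
def seArrow (R : RCT N) (tail head : ℕ × ℕ) : Prop :=
  tail ∈ R.shape ∧ head ∈ R.shape ∧ tail.1 < head.1 ∧ tail.2 < head.2 ∧
  (∃ a b : Fin N, R.entry tail = (a, true) ∧ R.entry head = (b, true) ∧
    (b : ℕ) = (a : ℕ) + 1) ∧
  ((head.1 = tail.1 + 1 ∧ head.2 = tail.2 + 1 ∧ (head.1, tail.2) ∈ R.shape) ∨
   (tail.2 + 1 < head.2 ∧
    (∀ p ∈ R.shape, tail.1 ≤ p.1 → p.1 ≤ head.1 → tail.2 ≤ p.2 → p.2 ≤ head.2 →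
      p.2 = tail.2 ∨ p.1 = head.1) ∧
    (∀ r : ℕ, tail.1 ≤ r → r ≤ head.1 → (r, tail.2) ∈ R.shape) ∧
    (∀ c : ℕ, tail.2 ≤ c → c ≤ head.2 → (head.1, c) ∈ R.shape)))

/-- A box is the tail of an arrow of `R`. -/
def IsArrowTail (R : RCT N) (β : ℕ × ℕ) : Prop :=
  (∃ h, nwArrow R β h) ∨ (∃ h, seArrow R β h)

/-- A box which is maximal in `D` for the northeast order. -/
def NEMaximal (D : Finset (ℕ × ℕ)) (β : ℕ × ℕ) : Prop :=
  β ∈ D ∧ ∀ q ∈ D, neLE β q → q = β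

/-- `L` is an arrow respecting reading order of the RCT `R`: an enumeration of
the boxes compatible with the northeast order, reading every arrow tail before
the corresponding head. -/
def IsARWord (R : RCT N) (L : List (ℕ × ℕ)) : Prop :=
  L.Nodup ∧ (∀ β : ℕ × ℕ, β ∈ L ↔ β ∈ R.shape) ∧
  (∀ β β' : ℕ × ℕ, β ∈ L → β' ∈ L → neLE β β' → β ≠ β' →
    L.idxOf β < L.idxOf β') ∧
  (∀ t h : ℕ × ℕ, nwArrow R t h ∨ seArrow R t h → L.idxOf t < L.idxOf h)

end NCS
namespace NCS

variable {N : ℕ}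

/-! ### Word conversion -/

/-- Rotate a list once to the right. -/
def rotR {α : Type*} (l : List α) : List α := l.rotate (l.length - 1)

/-- Word conversion: fix all letters not satisfying `p` and rotate each maximal
consecutive run of letters satisfying `p` once to the right. -/
def conv {α : Type*} (p : α → Bool) : List α → List α
  | [] => []
  | x :: xs =>
    if p x = true then
      rotR ((x :: xs).takeWhile p) ++ conv p (xs.dropWhile p)
    else x :: conv p xs
termination_by l => l.length
decreasing_by
  · exact Nat.lt_succ_of_le ((List.dropWhile_suffix p).length_le)
  · exact Nat.lt_succ_self _

/-! ### Ordinary RSK insertion -/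

/-- Row bumping: insert `x` into a weakly increasing row, bumping the leftmost
entry strictly greater than `x`. -/
def bumpRow : List ℕ → ℕ → List ℕ × Option ℕ
  | [], x => ([x], none)
  | y :: ys, x =>
    if x < y then (x :: ys, some y)
    else
      let p := bumpRow ys x
      (y :: p.1, p.2)

/-- Schensted insertion of a letter into a tableau (given as its list of rows). -/
def insertEntry : List (List ℕ) → ℕ → List (List ℕ)
  | [], x => [[x]]
  | row :: rest, x =>
    match bumpRow row x with
    | (row', none) => row' :: rest
    | (row', some y) => row' :: insertEntry rest y

/-- The insertion tableau of an ordinary word. -/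
def insertionTableau (w : List ℕ) : List (List ℕ) := w.foldl insertEntry []

/-- A tableau (list of rows) is superstandard: row `i` is filled with `i+1`'s
(`1`-indexed letters). -/
def IsSuperstandard (Q : List (List ℕ)) : Prop :=
  ∀ i : ℕ, ∀ h : i < Q.length, ∀ v ∈ Q.get ⟨i, h⟩, v = i + 1

/-! ### Standardization -/

/-- The ⋖-standardization of a colored word: occurrences of each letter are
relabelled, smallest letter first, left to right for unbarred letters and
right to left for barred letters, by `1, 2, …`. -/
def stdz (key : Letter N → ℕ) (w : List (Letter N)) : List ℕ :=
  (List.finRange w.length).map (fun i =>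
    ((List.finRange w.length).filter
        (fun j => decide (key (w.get j) < key (w.get i)))).length +
    (if (w.get i).2 then
        ((List.finRange w.length).filter
          (fun j => decide (i < j ∧ w.get j = w.get i))).length
      else
        ((List.finRange w.length).filter
          (fun j => decide (j < i ∧ w.get j = w.get i))).length) + 1)

/-- The free `ℤ`-algebra on the ordinary (unbarred) alphabet `ℕ`. -/
abbrev FAO := MonoidAlgebra ℤ (FreeMonoid ℕ)

/-- The monomial of an ordinary word. -/
def wrdO (w : List ℕ) : FAO := MonoidAlgebra.single (FreeMonoid.ofList w) 1

/-- The ordinary Knuth (plactic) relations. -/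
inductive knuthRel : FAO → FAO → Prop
  | k1 (a b c : ℕ) (h1 : a < b) (h2 : b < c) : knuthRel (wrdO [a, c, b]) (wrdO [c, a, b])
  | k2 (a b c : ℕ) (h1 : a < b) (h2 : b < c) : knuthRel (wrdO [b, a, c]) (wrdO [b, c, a])
  | k3 (a b : ℕ) (h : a < b) : knuthRel (wrdO [b, b, a]) (wrdO [b, a, b])
  | k4 (b c : ℕ) (h : b < c) : knuthRel (wrdO [c, b, b]) (wrdO [b, c, b])

/-! ### Pairing, the noncommutative Cauchy product, symmetric series -/

/-- The bilinear pairing on `U` for which the colored words are orthonormal. -/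
def pairU (f g : FA N) : ℤ := ∑ w ∈ f.coeff.support, f.coeff w * g.coeff w

/-- Coefficient of `x^m` in the noncommutative Cauchy product
`Ω(x,u) = Π_j (c_{z_1}(x_j) ⋯ c_{z_{2N}}(x_j))`: the product of the `h_{m_j}(u)`
in increasing order of `j`. -/
def OmegaC (key : Letter N → ℕ) (m : ℕ →₀ ℕ) : FA N :=
  ((m.support.sort (· ≤ ·)).map (fun j => hU key (m j))).prod

/-- Total degree of a monomial. -/
def degM (m : ℕ →₀ ℕ) : ℕ := m.sum fun _ k => k

/-- Coefficient of `x^m` in the monomial symmetric function `m_ν`. -/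
def mCoeff {k : ℕ} (ν : Nat.Partition k) (m : ℕ →₀ ℕ) : ℤ :=
  if Multiset.map (fun j => m j) m.support.val = ν.parts then 1 else 0

/-- `h_ν(u) = h_{ν_1}(u) h_{ν_2}(u) ⋯`. -/
def hProd (key : Letter N → ℕ) (L : List ℕ) : FA N := (L.map (hU key)).prod

/-- Coefficient of `x^m` in `F_γ(x) = Σ_w γ_w Q_{Des(w)}(x)`. -/
def FgammaC (key : Letter N → ℕ) (γ : FA N) (m : ℕ →₀ ℕ) : ℤ :=
  ∑ w ∈ γ.coeff.support, γ.coeff w *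
    Qcoeff (FreeMonoid.toList w).length (DesSet key (FreeMonoid.toList w)) m

/-- A series (given by its coefficients) is symmetric. -/
def SymmSeries (F : (ℕ →₀ ℕ) → ℤ) : Prop :=
  ∀ σ : Equiv.Perm ℕ, ∀ m : ℕ →₀ ℕ, F (Finsupp.mapDomain σ m) = F m

/-! ### Characters of symmetric groups and Kronecker coefficients -/

/-- The power sum polynomial `p_k` in `n` variables. -/
def powS (n k : ℕ) : MvPolynomial (Fin n) ℤ := ∑ j : Fin n, MvPolynomial.X j ^ k

/-- The Vandermonde alternant `a_δ = Σ_σ sgn(σ) Π_i x_{σ(i)}^{n-1-i}`. -/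
def aDelta (n : ℕ) : MvPolynomial (Fin n) ℤ :=
  ∑ σ : Equiv.Perm (Fin n),
    (Equiv.Perm.sign σ : ℤ) • ∏ i : Fin n, MvPolynomial.X (σ i) ^ (n - 1 - (i : ℕ))

/-- The irreducible character `χ^λ` of `S_n` evaluated at `σ`, via the Frobenius
character formula: the coefficient of `x^{λ+δ}` in `a_δ · p_{cycleType σ}`. -/
def chi (n : ℕ) (lam : Fin n → ℕ) (σ : Equiv.Perm (Fin n)) : ℤ :=
  MvPolynomial.coeff
    (Finsupp.equivFunOnFinite.symm (fun i : Fin n => lam i + (n - 1 - (i : ℕ))))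
    (aDelta n * (σ.cycleType.map (fun k => powS n k)).prod)

/-- The hook partition `μ(d) = (n-d, 1^d)`, as a function on `Fin n`. -/
def hookP (n d : ℕ) : Fin n → ℕ :=
  fun i => if (i : ℕ) = 0 then n - d else if (i : ℕ) ≤ d then 1 else 0

/-- `n!` times the Kronecker coefficient `g_{λμν}`, via
`g = (1/n!) Σ_σ χ^λ(σ) χ^μ(σ) χ^ν(σ)`. -/
def kronC (n : ℕ) (lam mu nu : Fin n → ℕ) : ℤ :=
  ∑ σ : Equiv.Perm (Fin n), chi n lam σ * chi n mu σ * chi n nu σ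

/-! ### Power series in `s` and `t` over `U/I_kronknuth` -/

/-- The quotient `U/I_kronknuth`. -/
abbrev QKK (N : ℕ) := RingQuot (kkRel N)

/-- The image of a generator in `U/I_kronknuth`. -/
def uQ (x : Letter N) : QKK N := RingQuot.mkRingHom (kkRel N) (wrd [x])

/-- A power series in `s` (variable `0`) only. -/
def serS (c : ℕ → QKK N) : MvPowerSeries (Fin 2) (QKK N) :=
  fun m => if m 1 = 0 then c (m 0) else 0

/-- A power series in `t` (variable `1`) only. -/
def serT (c : ℕ → QKK N) : MvPowerSeries (Fin 2) (QKK N) :=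
  fun m => if m 0 = 0 then c (m 1) else 0

/-- A constant power series. -/
def constSer (a : QKK N) : MvPowerSeries (Fin 2) (QKK N) :=
  fun m => if m = 0 then a else 0

/-- `f_x = 1 + u_x s` (`x` unbarred), `(1 - u_x s)⁻¹ = Σ_k u_x^k s^k` (`x` barred). -/
def fSer (x : Letter N) : MvPowerSeries (Fin 2) (QKK N) :=
  serS (fun k => if x.2 then uQ x ^ k else if k = 0 then 1 else if k = 1 then uQ x else 0)

/-- The inverse of `f_x`. -/
def fSerInv (x : Letter N) : MvPowerSeries (Fin 2) (QKK N) :=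
  serS (fun k => if x.2 then (if k = 0 then 1 else if k = 1 then -uQ x else 0)
    else (-uQ x) ^ k)

/-- `g_z = 1 + u_z t` (`z` unbarred), `(1 - u_z t)⁻¹` (`z` barred). -/
def gSer (z : Letter N) : MvPowerSeries (Fin 2) (QKK N) :=
  serT (fun k => if z.2 then uQ z ^ k else if k = 0 then 1 else if k = 1 then uQ z else 0)

/-- The inverse of `g_z`. -/
def gSerInv (z : Letter N) : MvPowerSeries (Fin 2) (QKK N) :=
  serT (fun k => if z.2 then (if k = 0 then 1 else if k = 1 then -uQ z else 0)
    else (-uQ z) ^ k)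

end NCS
namespace NCS

/-! ### Auxiliary material for Statement 2 -/

section Stmt2Aux

variable {N : ℕ} (key : Letter N → ℕ)

/-- Trichotomy: for any two letters, exactly one of `a ≥' b`, `a ≤'' b` holds. -/
lemma colGE_iff_not_rowLE (hkey : IsShuffleKey key) (a b : Letter N) :
    colGE key a b ↔ ¬ rowLE key a b := by
  unfold colGE rowLE
  by_cases hab : a = b
  · subst hab
    cases h2 : a.2 <;> simp [h2]
  · have hk : key a ≠ key b := fun h => hab (hkey.1 h)
    have : ¬ (a = b ∧ a.2 = true) := fun h => hab h.1
    have : ¬ (a = b ∧ a.2 = false) := fun h => hab h.1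
    constructor
    · rintro (h | ⟨rfl, _⟩)
      · rintro (h' | ⟨rfl, _⟩) <;> [omega; exact hab rfl]
      · exact absurd rfl hab
    · intro h
      push_neg at h
      left
      rcases h with ⟨h1, _⟩
      omega

/-- Multiplication of word monomials. -/
lemma wrd_mul_wrd (u v : List (Letter N)) : wrd u * wrd v = wrd (u ++ v) := by
  unfold wrd
  rw [MonoidAlgebra.single_mul_single, one_mul, FreeMonoid.ofList_append]

lemma wrd_nil_eq_one : (wrd ([] : List (Letter N))) = 1 := rfl

/-- Gluing two functions on `Fin i`, `Fin m` into one on `Fin n`, `n = i + m`. -/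
def glueF {α : Type*} (i : ℕ) {m n : ℕ} (h : n = i + m) (f : Fin i → α) (g : Fin m → α) :
    Fin n → α :=
  fun j => if h' : (j : ℕ) < i then f ⟨j, h'⟩ else g ⟨(j : ℕ) - i, by omega⟩

lemma ofFn_glueF {α : Type*} (i : ℕ) {m n : ℕ} (h : n = i + m) (f : Fin i → α)
    (g : Fin m → α) : List.ofFn f ++ List.ofFn g = List.ofFn (glueF i h f g) := by
  apply List.ext_getElem
  · simp; omega
  · intro j h1 h2
    simp only [List.getElem_ofFn, glueF]
    rcases lt_or_ge j i with hj | hj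
    · rw [List.getElem_append_left (by simpa using hj)]
      simp [hj]
    · rw [List.getElem_append_right (by simpa using hj)]
      simp only [List.length_ofFn, List.getElem_ofFn]
      have : ¬ (j < i) := not_lt.mpr hj
      simp [this]

/-- The condition that a word of length `n` splits at position `i` into an
`e`-admissible prefix and an `h`-admissible suffix. -/
def SplitOK (i : ℕ) {n : ℕ} (w : Fin n → Letter N) : Prop :=
  ∀ j j' : Fin n, (j' : ℕ) = (j : ℕ) + 1 →
    (((j' : ℕ) < i → colGE key (w j) (w j')) ∧ (i ≤ (j : ℕ) → rowLE key (w j) (w j')))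

/-- The adjacent pair at positions `j, j+1` is a `≥'` pair. -/
def PairD {n : ℕ} (w : Fin n → Letter N) (j : ℕ) : Prop :=
  ∃ (h1 : j < n) (h2 : j + 1 < n), colGE key (w ⟨j, h1⟩) (w ⟨j + 1, h2⟩)

/-- Whether a valid split can be extended one step to the right. -/
def CanUp (i : ℕ) {n : ℕ} (w : Fin n → Letter N) : Prop :=
  i < n ∧ (i = 0 ∨ PairD key w (i - 1))

/-- The sign-reversing involution on valid splits. -/
noncomputable def iota (i : ℕ) {n : ℕ} (w : Fin n → Letter N) : ℕ :=
  if CanUp key i w then i + 1 else i - 1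

lemma iota_spec (hkey : IsShuffleKey key) {n : ℕ} (hn : 1 ≤ n) (w : Fin n → Letter N)
    {i : ℕ} (hi : i ≤ n) (hw : SplitOK key i w) :
    iota key i w ≤ n ∧ SplitOK key (iota key i w) w ∧ iota key i w ≠ i ∧
      iota key (iota key i w) w = i ∧
      (-1 : ℤ) ^ i + (-1 : ℤ) ^ (iota key i w) = 0 := by
  have tri := colGE_iff_not_rowLE key hkey
  by_cases hC : CanUp key i w
  · -- iota = i + 1
    have hiota : iota key i w = i + 1 := if_pos hC
    obtain ⟨hin, hpre⟩ := hC
    have hS : SplitOK key (i + 1) w := by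
      intro j j' hjj'
      refine ⟨fun hlt => ?_, fun hle => (hw j j' hjj').2 (by omega)⟩
      rcases lt_or_ge (j' : ℕ) i with h' | h'
      · exact (hw j j' hjj').1 h'
      · -- j' = i, so j = i - 1 and i ≥ 1
        have hj'i : (j' : ℕ) = i := by omega
        have hi1 : i ≠ 0 := by omega
        rcases hpre with h0 | ⟨h1, h2, hcol⟩
        · omega
        · have e1 : j = ⟨i - 1, h1⟩ := by apply Fin.ext; simp; omega
          have e2 : j' = ⟨i - 1 + 1, h2⟩ := by apply Fin.ext; simp; omega
          rw [e1, e2]; exact hcol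
    have hnotC : ¬ CanUp key (i + 1) w := by
      rintro ⟨hin', h0 | hpd⟩
      · omega
      · obtain ⟨h1, h2, hcol⟩ := hpd
        have hrow : rowLE key (w ⟨i + 1 - 1, h1⟩) (w ⟨i + 1 - 1 + 1, h2⟩) :=
          (hw ⟨i + 1 - 1, h1⟩ ⟨i + 1 - 1 + 1, h2⟩ rfl).2 (by simp)
        exact (tri _ _).mp hcol hrow
    have hiota2 : iota key (i + 1) w = i := by
      rw [iota, if_neg hnotC]; omega
    refine ⟨by omega, ?_, by omega, ?_, ?_⟩ <;> rw [hiota]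
    · exact hS
    · exact hiota2
    · ring
  · -- iota = i - 1
    have hiota : iota key i w = i - 1 := if_neg hC
    have hi1 : 1 ≤ i := by
      by_contra h
      exact hC ⟨by omega, Or.inl (by omega)⟩
    have hS : SplitOK key (i - 1) w := by
      intro j j' hjj'
      refine ⟨fun hlt => (hw j j' hjj').1 (by omega), fun hle => ?_⟩
      rcases le_or_gt i (j : ℕ) with h' | h'
      · exact (hw j j' hjj').2 h'
      · -- j = i - 1, j' = i
        have hji : (j : ℕ) = i - 1 := by omega
        have hj'i : (j' : ℕ) = i := by omega
        have hin : i < n := by have := j'.2; omega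
        -- since ¬ CanUp and i < n, we get ¬ PairD key w (i-1), so rowLE
        have hnpd : ¬ PairD key w (i - 1) := by
          intro hpd
          exact hC ⟨hin, Or.inr hpd⟩
        by_contra hrow
        apply hnpd
        refine ⟨by omega, by omega, ?_⟩
        have e1 : (⟨i - 1, by omega⟩ : Fin n) = j := by apply Fin.ext; simp; omega
        have e2 : (⟨i - 1 + 1, by omega⟩ : Fin n) = j' := by apply Fin.ext; simp; omega
        rw [e1, e2]
        exact (tri _ _).mpr hrow
    have hCup : CanUp key (i - 1) w := by
      refine ⟨by omega, ?_⟩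
      rcases Nat.eq_or_lt_of_le hi1 with h1 | h2
      · exact Or.inl (by omega)
      · refine Or.inr ⟨by omega, by omega, ?_⟩
        exact (hw ⟨i - 1 - 1, by omega⟩ ⟨i - 1 - 1 + 1, by omega⟩ rfl).1 (by simp; omega)
    have hiota2 : iota key (i - 1) w = i := by
      rw [iota, if_pos hCup]; omega
    refine ⟨by omega, ?_, by omega, ?_, ?_⟩ <;> rw [hiota]
    · exact hS
    · exact hiota2
    · obtain ⟨k, hk⟩ : ∃ k, i = k + 1 := ⟨i - 1, by omega⟩
      subst hk
      simp only [Nat.add_sub_cancel, pow_succ]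
      ring

/-- The signed count of valid splits of a nonempty word is zero. -/
lemma signed_splits_zero (hkey : IsShuffleKey key) {n : ℕ} (hn : 1 ≤ n)
    (w : Fin n → Letter N) :
    ∑ i ∈ (Finset.range (n + 1)).filter (fun i => SplitOK key i w), (-1 : ℤ) ^ i = 0 := by
  apply Finset.sum_involution (g := fun i _ => iota key i w)
  · intro i hi
    simp only [Finset.mem_filter, Finset.mem_range] at hi
    exact (iota_spec key hkey hn w (by omega) hi.2).2.2.2.2
  · intro i hi _
    simp only [Finset.mem_filter, Finset.mem_range] at hi
    exact (iota_spec key hkey hn w (by omega) hi.2).2.2.1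
  · intro i hi
    simp only [Finset.mem_filter, Finset.mem_range] at hi ⊢
    have h := iota_spec key hkey hn w (by omega) hi.2
    exact ⟨by omega, h.2.1⟩
  · intro i hi
    simp only [Finset.mem_filter, Finset.mem_range] at hi
    exact (iota_spec key hkey hn w (by omega) hi.2).2.2.2.1

/-- `eU` as a sum over admissible sequences. -/
lemma eU_eq_sum (k : ℕ) : eU key k =
    ∑ f ∈ (Finset.univ : Finset (Fin k → Letter N)).filter
      (fun f => ∀ i j : Fin k, (j : ℕ) = (i : ℕ) + 1 → colGE key (f i) (f j)),
      wrd (List.ofFn f) := by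
  unfold eU eSet
  apply Finset.sum_congr _ (fun _ _ => rfl)
  ext f
  simp

lemma eU_zero : eU key 0 = 1 := by
  rw [eU_eq_sum]
  rw [Finset.filter_true_of_mem (fun f _ => fun i j _ => i.elim0),
    Finset.univ_unique, Finset.sum_singleton, List.ofFn_zero, wrd_nil_eq_one]

lemma hU_zero : hU key 0 = 1 := by
  unfold hU
  rw [Finset.filter_true_of_mem (fun f _ => fun i j _ => i.elim0),
    Finset.univ_unique, Finset.sum_singleton, List.ofFn_zero, wrd_nil_eq_one]

/-- The product `e_i(u) h_m(u)` as a sum over words with a valid split. -/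
lemma eU_mul_hU (i m n : ℕ) (h : n = i + m) :
    eU key i * hU key m =
      ∑ w ∈ (Finset.univ : Finset (Fin n → Letter N)).filter (fun w => SplitOK key i w),
        wrd (List.ofFn w) := by
  rw [eU_eq_sum]
  unfold hU
  rw [Finset.sum_mul_sum]
  rw [← Finset.sum_product']
  apply Finset.sum_nbij' (i := fun p => glueF i h p.1 p.2)
    (j := fun w => (fun a : Fin i => w ⟨a, by omega⟩, fun b : Fin m => w ⟨i + b, by omega⟩))
  · rintro ⟨f, g⟩ hp
    simp only [Finset.mem_product, Finset.mem_filter, Finset.mem_univ, true_and] at hp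
    obtain ⟨hf, hg⟩ := hp
    simp only [Finset.mem_filter, Finset.mem_univ, true_and]
    intro j j' hjj'
    constructor
    · intro hlt
      have hj : (j : ℕ) < i := by omega
      have e1 : glueF i h f g j = f ⟨j, hj⟩ := by simp [glueF, hj]
      have e2 : glueF i h f g j' = f ⟨j', hlt⟩ := by simp [glueF, hlt]
      rw [e1, e2]
      exact hf ⟨j, hj⟩ ⟨j', hlt⟩ (by simp [hjj'])
    · intro hle
      have hj : ¬ ((j : ℕ) < i) := by omega
      have hj' : ¬ ((j' : ℕ) < i) := by omega
      have hjm : (j : ℕ) - i < m := by have := j.2; omega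
      have hj'm : (j' : ℕ) - i < m := by have := j'.2; omega
      have e1 : glueF i h f g j = g ⟨(j : ℕ) - i, hjm⟩ := by simp [glueF, hj]
      have e2 : glueF i h f g j' = g ⟨(j' : ℕ) - i, hj'm⟩ := by simp [glueF, hj']
      rw [e1, e2]
      exact hg ⟨(j : ℕ) - i, hjm⟩ ⟨(j' : ℕ) - i, hj'm⟩ (by simp; omega)
  · intro w hw
    simp only [Finset.mem_filter, Finset.mem_univ, true_and] at hw
    simp only [Finset.mem_product, Finset.mem_filter, Finset.mem_univ, true_and]
    constructor
    · intro a a' haa'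
      have := (hw ⟨a, by omega⟩ ⟨a', by omega⟩ (by simpa using haa')).1
      exact this (by simpa using a'.2)
    · intro b b' hbb'
      have := (hw ⟨i + b, by omega⟩ ⟨i + b', by omega⟩ (by simp; omega)).2
      exact this (by simp)
  · rintro ⟨f, g⟩ hp
    simp only
    congr 1
    · funext a
      simp [glueF, a.2]
    · funext b
      have hb : ¬ (i + (b : ℕ) < i) := by omega
      simp [glueF, hb]
  · intro w hw
    funext j
    simp only [glueF]
    split
    · rfl
    · congr 1
      apply Fin.ext
      simp
      omega
  · rintro ⟨f, g⟩ hp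
    rw [wrd_mul_wrd, ofFn_glueF]

/-- The key identity `Σ_{i=0}^{n} (-1)^i e_i(u) h_{n-i}(u) = 0` for `n ≥ 1`. -/
theorem newton_identity (hkey : IsShuffleKey key) (n : ℕ) (hn : 1 ≤ n) :
    ∑ i ∈ Finset.range (n + 1), (-1 : ℤ) ^ i • (eU key i * hU key (n - i)) = 0 := by
  have step : ∀ i ∈ Finset.range (n + 1),
      (-1 : ℤ) ^ i • (eU key i * hU key (n - i)) =
        ∑ w ∈ (Finset.univ : Finset (Fin n → Letter N)),
          (if SplitOK key i w then ((-1 : ℤ) ^ i) • wrd (List.ofFn w) else 0) := by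
    intro i hi
    simp only [Finset.mem_range] at hi
    rw [eU_mul_hU key i (n - i) n (by omega), Finset.smul_sum, ← Finset.sum_filter]
  rw [Finset.sum_congr rfl step, Finset.sum_comm]
  apply Finset.sum_eq_zero
  intro w _
  rw [← Finset.sum_filter, ← Finset.sum_smul, signed_splits_zero key hkey hn w, zero_smul]

section RingLemmas

variable {Q : Type*} [Ring Q]

lemma commute_of_mem_closure {s : Set Q} (hs : ∀ a ∈ s, ∀ b ∈ s, Commute a b)
    {x y : Q} (hx : x ∈ Subring.closure s) (hy : y ∈ Subring.closure s) : Commute x y := by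
  have h1 : Subring.closure s ≤ Subring.centralizer s :=
    Subring.closure_le.mpr fun a ha =>
      Subring.mem_centralizer_iff.mpr fun b hb => hs b hb a ha
  have h2 : Subring.closure s ≤ Subring.centralizer (Subring.closure s : Set Q) :=
    Subring.closure_le.mpr fun a ha =>
      Subring.mem_centralizer_iff.mpr fun g hg => ((Subring.mem_centralizer_iff.mp (h1 hg)) a ha).symm
  exact ((Subring.mem_centralizer_iff.mp (h2 hx)) y hy).symm

lemma H_mem_closure (E H : ℕ → Q) (hE0 : E 0 = 1) (hH0 : H 0 = 1)
    (hid : ∀ n, 1 ≤ n → ∑ i ∈ Finset.range (n + 1), (-1 : ℤ) ^ i • (E i * H (n - i)) = 0) :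
    ∀ n, H n ∈ Subring.closure (Set.range E) := by
  intro n
  induction n using Nat.strong_induction_on with
  | _ n ih =>
    rcases Nat.eq_zero_or_pos n with rfl | hn
    · rw [hH0]; exact one_mem _
    · have h := hid n hn
      rw [Finset.sum_range_succ'] at h
      simp only [pow_zero, one_smul, hE0, one_mul, Nat.sub_zero] at h
      have hHn : H n = -∑ i ∈ Finset.range n, (-1 : ℤ) ^ (i + 1) • (E (i + 1) * H (n - (i + 1))) :=
        eq_neg_of_add_eq_zero_right h
      rw [hHn]
      apply neg_mem
      apply sum_mem
      intro i hi
      apply zsmul_mem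
      exact mul_mem (Subring.subset_closure ⟨i + 1, rfl⟩) (ih (n - (i + 1)) (by omega))

lemma E_mem_closure (E H : ℕ → Q) (hE0 : E 0 = 1) (hH0 : H 0 = 1)
    (hid : ∀ n, 1 ≤ n → ∑ i ∈ Finset.range (n + 1), (-1 : ℤ) ^ i • (E i * H (n - i)) = 0) :
    ∀ n, E n ∈ Subring.closure (Set.range H) := by
  intro n
  induction n using Nat.strong_induction_on with
  | _ n ih =>
    rcases Nat.eq_zero_or_pos n with rfl | hn
    · rw [hE0]; exact one_mem _
    · have h := hid n hn
      rw [Finset.sum_range_succ] at h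
      simp only [Nat.sub_self, hH0, mul_one] at h
      have hEn : (-1 : ℤ) ^ n • E n =
          -∑ i ∈ Finset.range n, (-1 : ℤ) ^ i • (E i * H (n - i)) :=
        eq_neg_of_add_eq_zero_right h
      have hE : E n = (-1 : ℤ) ^ n • ((-1 : ℤ) ^ n • E n) := by
        rw [smul_smul, ← pow_add, Even.neg_one_pow ⟨n, rfl⟩, one_smul]
      rw [hE, hEn]
      apply zsmul_mem
      apply neg_mem
      apply sum_mem
      intro i hi
      apply zsmul_mem
      exact mul_mem (ih i (Finset.mem_range.mp hi)) (Subring.subset_closure ⟨n - i, rfl⟩)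

lemma newton_commute_transfer (E H : ℕ → Q) (hE0 : E 0 = 1) (hH0 : H 0 = 1)
    (hid : ∀ n, 1 ≤ n → ∑ i ∈ Finset.range (n + 1), (-1 : ℤ) ^ i • (E i * H (n - i)) = 0) :
    (∀ k l, Commute (E k) (E l)) ↔ (∀ k l, Commute (H k) (H l)) := by
  constructor
  · intro hE k l
    refine commute_of_mem_closure (s := Set.range E) ?_
      (H_mem_closure E H hE0 hH0 hid k) (H_mem_closure E H hE0 hH0 hid l)
    rintro a ⟨i, rfl⟩ b ⟨j, rfl⟩
    exact hE i j
  · intro hH k l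
    refine commute_of_mem_closure (s := Set.range H) ?_
      (E_mem_closure E H hE0 hH0 hid k) (E_mem_closure E H hE0 hH0 hid l)
    rintro a ⟨i, rfl⟩ b ⟨j, rfl⟩
    exact hH i j

end RingLemmas

end Stmt2Aux

/-- For a two-sided ideal `I` of `U`, the `e_k(u)` pairwise
commute mod `I` iff the `h_k(u)` pairwise commute mod `I`. -/
theorem elementary_commute_iff_homogeneous_commute (N : ℕ) (key : Letter N → ℕ)
    (hkey : IsShuffleKey key) (I : TwoSidedIdeal (FA N)) :
    (∀ k l : ℕ, eU key k * eU key l - eU key l * eU key k ∈ I) ↔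
      (∀ k l : ℕ, hU key k * hU key l - hU key l * hU key k ∈ I) := by
  set c := I.ringCon with hc
  let φ : FA N →+* c.Quotient := c.mk'
  have hiff : ∀ a b : FA N, (a * b - b * a ∈ I) ↔ Commute (φ a) (φ b) := by
    intro a b
    have h1 : (Commute (φ a) (φ b)) ↔ φ (a * b) = φ (b * a) := by
      rw [map_mul, map_mul]; exact Iff.rfl
    rw [h1]
    have h2 : φ (a * b) = φ (b * a) ↔ c (a * b) (b * a) := RingCon.eq c
    rw [h2, I.rel_iff]
  have hE0 : φ (eU key 0) = 1 := by rw [eU_zero]; exact map_one φ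
  have hH0 : φ (hU key 0) = 1 := by rw [hU_zero]; exact map_one φ
  have hid : ∀ n, 1 ≤ n →
      ∑ i ∈ Finset.range (n + 1), (-1 : ℤ) ^ i • (φ (eU key i) * φ (hU key (n - i))) = 0 := by
    intro n hn
    have h := congrArg φ (newton_identity key hkey n hn)
    rw [map_zero, map_sum] at h
    simp only [map_zsmul, map_mul] at h
    exact h
  have main := newton_commute_transfer (fun k => φ (eU key k)) (fun k => φ (hU key k))
    hE0 hH0 hid
  simp only [hiff]
  exact main

end NCS
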